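/- Suppose p₀ has compact support contained in the closed ball of radius R > 0 centered at the origin, with p₀ > 0 on its support. Then the backward operator T_t is Hilbert–Schmidt: its squared Hilbert–Schmidt norm, given by ∬ (p_t(x₀∣x_t)/p₀(x₀))² p₀(x₀) p_t(x_t) dx₀ dx_t, is at most 2^{d/2} exp(19 ᾱ R² / (2(1−ᾱ))), and in particular is finite for every ᾱ ∈ (0,1). -/

import Mathlib

open MeasureTheory Real

/-- Forward Gaussian kernel `p_t(x_t | x_0)` with noise level `ᾱ = α`. -/
noncomputable def gaussKer (d : ℕ) (α : ℝ) (x0 xt : EuclideanSpace ℝ (Fin d)) : ℝ :=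
  (2 * π * (1 - α)) ^ (-(d : ℝ) / 2) *
    Real.exp (-‖xt - (Real.sqrt α) • x0‖ ^ 2 / (2 * (1 - α)))

/-- Marginal density `p_t(x_t) = ∫ p_t(x_t|x_0) p_0(x_0) dx_0`. -/
noncomputable def marginal (d : ℕ) (α : ℝ) (p0 : EuclideanSpace ℝ (Fin d) → ℝ)
    (xt : EuclideanSpace ℝ (Fin d)) : ℝ :=
  ∫ x0, gaussKer d α x0 xt * p0 x0

/-- Posterior density `p_t(x_0 | x_t) = p_t(x_t|x_0) p_0(x_0) / p_t(x_t)`. -/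
noncomputable def posterior (d : ℕ) (α : ℝ) (p0 : EuclideanSpace ℝ (Fin d) → ℝ)
    (x0 xt : EuclideanSpace ℝ (Fin d)) : ℝ :=
  gaussKer d α x0 xt * p0 x0 / marginal d α p0 xt

/-- Backward operator `(T_t f)(x_t) = ∫ f(x_0) p_t(x_0|x_t) dx_0`. -/
noncomputable def Tt (d : ℕ) (α : ℝ) (p0 : EuclideanSpace ℝ (Fin d) → ℝ)
    (f : EuclideanSpace ℝ (Fin d) → ℝ) (xt : EuclideanSpace ℝ (Fin d)) : ℝ :=
  ∫ x0, f x0 * posterior d α p0 x0 xt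

/-- Forward (adjoint) operator `(T_t⋆ g)(x_0) = ∫ g(x_t) p_t(x_t|x_0) dx_t`. -/
noncomputable def TtStar (d : ℕ) (α : ℝ) (p0 : EuclideanSpace ℝ (Fin d) → ℝ)
    (g : EuclideanSpace ℝ (Fin d) → ℝ) (x0 : EuclideanSpace ℝ (Fin d)) : ℝ :=
  ∫ xt, g xt * gaussKer d α x0 xt

section aux
open MeasureTheory Real

lemma integrable_gauss_eucl {d : ℕ} {b : ℝ} (hb : 0 < b) :
    Integrable (fun v : EuclideanSpace ℝ (Fin d) => Real.exp (-b * ‖v‖ ^ 2)) := by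
  have h := (GaussianFourier.integrable_cexp_neg_mul_sq_norm_add
    (V := EuclideanSpace ℝ (Fin d)) (b := (b : ℂ)) (by simpa using hb) 0 0).norm
  have key : ∀ v : EuclideanSpace ℝ (Fin d),
      ‖Complex.exp (-(b:ℂ) * (‖v‖:ℂ) ^ 2 + 0 * ((inner ℝ (0 : EuclideanSpace ℝ (Fin d)) v : ℝ) : ℂ))‖
        = Real.exp (-b * ‖v‖ ^ 2) := by
    intro v
    have e : (-(b:ℂ) * (‖v‖:ℂ) ^ 2 + 0 * ((inner ℝ (0 : EuclideanSpace ℝ (Fin d)) v : ℝ) : ℂ))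
        = ((-b * ‖v‖ ^ 2 : ℝ) : ℂ) := by push_cast; ring
    rw [e, Complex.norm_exp, Complex.ofReal_re]
  rw [show (fun v : EuclideanSpace ℝ (Fin d) => Real.exp (-b * ‖v‖ ^ 2))
      = fun v => ‖Complex.exp (-(b:ℂ) * (‖v‖:ℂ) ^ 2
        + 0 * ((inner ℝ (0 : EuclideanSpace ℝ (Fin d)) v : ℝ) : ℂ))‖
    from funext fun v => (key v).symm]
  exact h

lemma integral_gauss_eucl {d : ℕ} {b : ℝ} (hb : 0 < b) :
    ∫ v : EuclideanSpace ℝ (Fin d), Real.exp (-b * ‖v‖ ^ 2) = (π / b) ^ ((d : ℝ) / 2) := by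
  rw [GaussianFourier.integral_rexp_neg_mul_sq_norm hb, finrank_euclideanSpace_fin]

lemma key_exp_ineq {d : ℕ} (α R : ℝ) (hα0 : 0 < α) (hα1 : α < 1)
    (x0 xt : EuclideanSpace ℝ (Fin d)) (hx : ‖x0‖ ≤ R) :
    Real.exp (-‖xt - Real.sqrt α • x0‖ ^ 2 / (2 * (1 - α))) ^ 2
      ≤ Real.exp (-(‖xt‖ + Real.sqrt α * R) ^ 2 / (2 * (1 - α)))
        * (Real.exp (19 * α * R ^ 2 / (2 * (1 - α)))
        * Real.exp (-(4 * (1 - α))⁻¹ * ‖xt‖ ^ 2)) := by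
  have hσ : (0:ℝ) < 1 - α := by linarith
  set s : ℝ := Real.sqrt α with hs
  have hs0 : 0 ≤ s := Real.sqrt_nonneg α
  have hs2 : s ^ 2 = α := Real.sq_sqrt hα0.le
  rw [sq, ← Real.exp_add, ← Real.exp_add, ← Real.exp_add, Real.exp_le_exp]
  have h1 : ‖xt - s • x0‖ ^ 2
      = ‖xt‖ ^ 2 - 2 * (s * (inner ℝ xt x0 : ℝ)) + α * ‖x0‖ ^ 2 := by
    rw [norm_sub_sq_real, real_inner_smul_right, norm_smul, Real.norm_eq_abs,
      abs_of_nonneg hs0, mul_pow, hs2]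
  have h2 : (inner ℝ xt x0 : ℝ) ≤ ‖xt‖ * ‖x0‖ := real_inner_le_norm _ _
  have h4 : s * (inner ℝ xt x0 : ℝ) ≤ s * (‖xt‖ * R) := by
    apply mul_le_mul_of_nonneg_left _ hs0
    calc (inner ℝ xt x0 : ℝ) ≤ ‖xt‖ * ‖x0‖ := h2
    _ ≤ ‖xt‖ * R := mul_le_mul_of_nonneg_left hx (norm_nonneg _)
  have he3 : -(4 * (1 - α))⁻¹ * ‖xt‖ ^ 2 = (-(‖xt‖ ^ 2 / 2)) / (2 * (1 - α)) := by
    rw [eq_div_iff (by positivity : (2 * (1 - α)) ≠ 0)]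
    field_simp
    ring
  rw [h1, he3, ← add_div, ← add_div, ← add_div,
    div_le_div_iff_of_pos_right (by positivity : (0:ℝ) < 2 * (1 - α))]
  rw [← hs2]
  nlinarith [sq_nonneg (‖xt‖ - 6 * s * R), mul_nonneg (mul_nonneg hs0 hs0) (sq_nonneg ‖x0‖),
    norm_nonneg xt, norm_nonneg x0, h4, mul_nonneg hs0 (norm_nonneg xt)]

end aux

/-- if `p₀` has compact support inside the closed ball of radius `R`
(with `p₀ > 0` on its support), then `T_t` is Hilbert–Schmidt, with squared
Hilbert–Schmidt norm at most `2^{d/2} exp(19 ᾱ R² / (2(1−ᾱ)))`. -/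
theorem hilbert_schmidt (d : ℕ) (α : ℝ) (hα : α ∈ Set.Ioo (0:ℝ) 1)
    (p0 : EuclideanSpace ℝ (Fin d) → ℝ) (hp0m : Measurable p0)
    (hp0 : ∀ x, 0 ≤ p0 x) (hp01 : ∫ x, p0 x = 1)
    (R : ℝ) (hR : 0 < R)
    (hsupp : Function.support p0 ⊆ Metric.closedBall 0 R)
    (hpos : ∀ x ∈ tsupport p0, 0 < p0 x) :
    Integrable (fun q : EuclideanSpace ℝ (Fin d) × EuclideanSpace ℝ (Fin d) =>
      (posterior d α p0 q.1 q.2 / p0 q.1) ^ 2 * (p0 q.1 * marginal d α p0 q.2)) ∧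
    (∫ q : EuclideanSpace ℝ (Fin d) × EuclideanSpace ℝ (Fin d),
        (posterior d α p0 q.1 q.2 / p0 q.1) ^ 2 * (p0 q.1 * marginal d α p0 q.2))
      ≤ (2 : ℝ) ^ ((d : ℝ) / 2) * Real.exp (19 * α * R ^ 2 / (2 * (1 - α))) := by
  obtain ⟨hα0, hα1⟩ := hα
  have hσ : (0:ℝ) < 1 - α := by linarith
  have hπσ : (0:ℝ) < 2 * π * (1 - α) := by positivity
  set c : ℝ := (2 * π * (1 - α)) ^ (-(d:ℝ)/2) with hc
  have hcpos : 0 < c := Real.rpow_pos_of_pos hπσ _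
  have hp0int : Integrable p0 := by
    by_contra h
    rw [integral_undef h] at hp01
    norm_num at hp01
  -- continuity / measurability
  have hcont : Continuous (fun q : EuclideanSpace ℝ (Fin d) × EuclideanSpace ℝ (Fin d) =>
      gaussKer d α q.1 q.2) := by
    unfold gaussKer
    fun_prop
  have hker_nonneg : ∀ x0 xt, 0 ≤ gaussKer d α x0 xt := by
    intro x0 xt
    unfold gaussKer
    exact mul_nonneg (Real.rpow_pos_of_pos hπσ _).le (Real.exp_pos _).le
  have hker_le : ∀ x0 xt, gaussKer d α x0 xt ≤ c := by
    intro x0 xt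
    unfold gaussKer
    rw [← hc]
    apply mul_le_of_le_one_right hcpos.le
    rw [Real.exp_le_one_iff]
    apply div_nonpos_of_nonpos_of_nonneg (neg_nonpos.mpr (by positivity)) (by positivity)
  have hker_int : ∀ xt, Integrable (fun y => gaussKer d α y xt * p0 y) := by
    intro xt
    apply Integrable.mono' (hp0int.const_mul c)
    · exact ((hcont.comp (continuous_id.prodMk continuous_const)).aestronglyMeasurable.mul
        hp0m.aestronglyMeasurable)
    · filter_upwards with y
      rw [Real.norm_eq_abs, abs_of_nonneg (mul_nonneg (hker_nonneg y xt) (hp0 y))]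
      exact mul_le_mul_of_nonneg_right (hker_le y xt) (hp0 y)
  have hmargm : Measurable (marginal d α p0) := by
    unfold marginal
    have hsm : StronglyMeasurable (fun q : EuclideanSpace ℝ (Fin d) × EuclideanSpace ℝ (Fin d) =>
        gaussKer d α q.2 q.1 * p0 q.2) :=
      ((hcont.comp (continuous_snd.prodMk continuous_fst)).measurable.mul
        (hp0m.comp measurable_snd)).stronglyMeasurable
    exact (hsm.integral_prod_right').measurable
  -- lower bound on marginal
  have hmarg_ge : ∀ xt, c * Real.exp (-(‖xt‖ + Real.sqrt α * R) ^ 2 / (2 * (1 - α)))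
      ≤ marginal d α p0 xt := by
    intro xt
    have h1 : c * Real.exp (-(‖xt‖ + Real.sqrt α * R) ^ 2 / (2 * (1 - α)))
        = ∫ y, (c * Real.exp (-(‖xt‖ + Real.sqrt α * R) ^ 2 / (2 * (1 - α)))) * p0 y := by
      rw [integral_const_mul, hp01, mul_one]
    rw [h1]
    unfold marginal
    apply integral_mono (hp0int.const_mul _) (hker_int xt)
    intro y
    by_cases hy : p0 y = 0
    · simp [hy]
    · have hyR : ‖y‖ ≤ R := by
        have := hsupp (Function.mem_support.mpr hy)
        simpa [mem_closedBall_zero_iff] using this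
      apply mul_le_mul_of_nonneg_right _ (hp0 y)
      unfold gaussKer
      rw [← hc]
      apply mul_le_mul_of_nonneg_left _ hcpos.le
      rw [Real.exp_le_exp]
      have hnorm : ‖xt - Real.sqrt α • y‖ ≤ ‖xt‖ + Real.sqrt α * R := by
        calc ‖xt - Real.sqrt α • y‖ ≤ ‖xt‖ + ‖Real.sqrt α • y‖ := norm_sub_le _ _
        _ = ‖xt‖ + Real.sqrt α * ‖y‖ := by
            rw [norm_smul, Real.norm_eq_abs, abs_of_nonneg (Real.sqrt_nonneg α)]
        _ ≤ ‖xt‖ + Real.sqrt α * R := by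
            exact add_le_add (le_refl _) (mul_le_mul_of_nonneg_left hyR (Real.sqrt_nonneg α))
      have hsq : ‖xt - Real.sqrt α • y‖ ^ 2 ≤ (‖xt‖ + Real.sqrt α * R) ^ 2 :=
        pow_le_pow_left₀ (norm_nonneg _) hnorm 2
      rw [div_le_div_iff_of_pos_right (by positivity : (0:ℝ) < 2 * (1 - α))]
      linarith [hsq]
  have hmarg_pos : ∀ xt, 0 < marginal d α p0 xt := fun xt =>
    lt_of_lt_of_le (by positivity) (hmarg_ge xt)
  -- dominating function
  set C : ℝ := Real.exp (19 * α * R ^ 2 / (2 * (1 - α))) with hC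
  have hCpos : 0 < C := Real.exp_pos _
  have hbpos : (0:ℝ) < (4 * (1 - α))⁻¹ := by positivity
  set g : EuclideanSpace ℝ (Fin d) → ℝ :=
    fun xt => c * Real.exp (-(4 * (1 - α))⁻¹ * ‖xt‖ ^ 2) with hg
  have hgpos : ∀ xt, 0 < g xt := fun xt => mul_pos hcpos (Real.exp_pos _)
  have hgint : Integrable g := (integrable_gauss_eucl hbpos).const_mul c
  have hGint : Integrable (fun q : EuclideanSpace ℝ (Fin d) × EuclideanSpace ℝ (Fin d) =>
      (C * p0 q.1) * g q.2) := (hp0int.const_mul C).mul_prod hgint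
  have hGval : (∫ q : EuclideanSpace ℝ (Fin d) × EuclideanSpace ℝ (Fin d),
      (C * p0 q.1) * g q.2) = (2:ℝ) ^ ((d:ℝ)/2) * C := by
    rw [Measure.volume_eq_prod,
      integral_prod_mul (f := fun x => C * p0 x) (g := g), integral_const_mul, hp01, mul_one]
    have h2 : ∫ xt : EuclideanSpace ℝ (Fin d), g xt = (2:ℝ) ^ ((d:ℝ)/2) := by
      rw [hg]
      rw [integral_const_mul, integral_gauss_eucl hbpos]
      have h3 : π / (4 * (1 - α))⁻¹ = 2 * (2 * π * (1 - α)) := by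
        field_simp
        ring
      rw [h3, Real.mul_rpow (by norm_num) hπσ.le, hc, ← mul_assoc,
        mul_comm ((2 * π * (1 - α)) ^ (-(d:ℝ)/2)) ((2:ℝ) ^ ((d:ℝ)/2)), mul_assoc,
        ← Real.rpow_add hπσ]
      rw [neg_div, neg_add_cancel, Real.rpow_zero, mul_one]
    rw [h2]
    ring
  -- pointwise bound
  have hFle : ∀ q : EuclideanSpace ℝ (Fin d) × EuclideanSpace ℝ (Fin d),
      (posterior d α p0 q.1 q.2 / p0 q.1) ^ 2 * (p0 q.1 * marginal d α p0 q.2)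
        ≤ (C * p0 q.1) * g q.2 := by
    rintro ⟨x0, xt⟩
    by_cases h0 : p0 x0 = 0
    · simp [posterior, h0]
    · have hp0x : 0 < p0 x0 := (hp0 x0).lt_of_ne' h0
      have hxR : ‖x0‖ ≤ R := by
        have := hsupp (Function.mem_support.mpr h0)
        simpa [mem_closedBall_zero_iff] using this
      have hm := hmarg_pos xt
      have hpost : posterior d α p0 x0 xt / p0 x0
          = gaussKer d α x0 xt / marginal d α p0 xt := by
        unfold posterior
        field_simp
      have hkey : gaussKer d α x0 xt ^ 2
          ≤ (c * Real.exp (-(‖xt‖ + Real.sqrt α * R) ^ 2 / (2 * (1 - α)))) * (C * g xt) := by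
        have := key_exp_ineq α R hα0 hα1 x0 xt hxR
        unfold gaussKer
        rw [← hc, hC, hg, mul_pow]
        calc c ^ 2 * Real.exp (-‖xt - Real.sqrt α • x0‖ ^ 2 / (2 * (1 - α))) ^ 2
            ≤ c ^ 2 * (Real.exp (-(‖xt‖ + Real.sqrt α * R) ^ 2 / (2 * (1 - α)))
              * (Real.exp (19 * α * R ^ 2 / (2 * (1 - α)))
              * Real.exp (-(4 * (1 - α))⁻¹ * ‖xt‖ ^ 2))) :=
            mul_le_mul_of_nonneg_left this (by positivity)
        _ = (c * Real.exp (-(‖xt‖ + Real.sqrt α * R) ^ 2 / (2 * (1 - α))))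
              * (Real.exp (19 * α * R ^ 2 / (2 * (1 - α)))
              * (c * Real.exp (-(4 * (1 - α))⁻¹ * ‖xt‖ ^ 2))) := by ring
      rw [hpost, div_pow]
      have hL : (0:ℝ) < c * Real.exp (-(‖xt‖ + Real.sqrt α * R) ^ 2 / (2 * (1 - α))) := by
        positivity
      calc gaussKer d α x0 xt ^ 2 / marginal d α p0 xt ^ 2
            * (p0 x0 * marginal d α p0 xt)
          = gaussKer d α x0 xt ^ 2 * p0 x0 / marginal d α p0 xt := by
            field_simp
        _ ≤ ((c * Real.exp (-(‖xt‖ + Real.sqrt α * R) ^ 2 / (2 * (1 - α)))) * (C * g xt))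
              * p0 x0 / marginal d α p0 xt := by
            gcongr
        _ ≤ (marginal d α p0 xt * (C * g xt)) * p0 x0 / marginal d α p0 xt := by
            gcongr
            exact hmarg_ge xt
        _ = (C * p0 x0) * g xt := by
            field_simp
  have hF_nonneg : ∀ q : EuclideanSpace ℝ (Fin d) × EuclideanSpace ℝ (Fin d),
      0 ≤ (posterior d α p0 q.1 q.2 / p0 q.1) ^ 2 * (p0 q.1 * marginal d α p0 q.2) := by
    rintro ⟨x0, xt⟩
    exact mul_nonneg (sq_nonneg _) (mul_nonneg (hp0 x0) (hmarg_pos xt).le)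
  have hFm : AEStronglyMeasurable (fun q : EuclideanSpace ℝ (Fin d) × EuclideanSpace ℝ (Fin d) =>
      (posterior d α p0 q.1 q.2 / p0 q.1) ^ 2 * (p0 q.1 * marginal d α p0 q.2)) (volume) := by
    unfold posterior
    apply Measurable.aestronglyMeasurable
    exact ((((hcont.measurable.mul (hp0m.comp measurable_fst)).div
      (hmargm.comp measurable_snd)).div (hp0m.comp measurable_fst)).pow_const 2).mul
      ((hp0m.comp measurable_fst).mul (hmargm.comp measurable_snd))
  have hFint : Integrable (fun q : EuclideanSpace ℝ (Fin d) × EuclideanSpace ℝ (Fin d) =>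
      (posterior d α p0 q.1 q.2 / p0 q.1) ^ 2 * (p0 q.1 * marginal d α p0 q.2)) := by
    apply Integrable.mono' hGint hFm
    filter_upwards with q
    rw [Real.norm_eq_abs, abs_of_nonneg (hF_nonneg q)]
    exact hFle q
  refine ⟨hFint, ?_⟩
  calc (∫ q : EuclideanSpace ℝ (Fin d) × EuclideanSpace ℝ (Fin d),
        (posterior d α p0 q.1 q.2 / p0 q.1) ^ 2 * (p0 q.1 * marginal d α p0 q.2))
      ≤ ∫ q : EuclideanSpace ℝ (Fin d) × EuclideanSpace ℝ (Fin d), (C * p0 q.1) * g q.2 :=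
        integral_mono hFint hGint hFle
    _ = (2:ℝ) ^ ((d:ℝ)/2) * C := hGval
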